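/- Let r ≥ 1 and let n be a positive multiple of 2^r, n = m·2^r with m ≥ 1. There exists a graph G on n vertices with minimum degree δ(G) = (1 − 1/2^r)·n − 1 and an r-edge-coloring of G such that V(G) cannot be covered by r monochromatic connected subgraphs of pairwise distinct colors. -/

import Mathlib

open SimpleGraph

/-- The subgraph of `G` consisting of edges of color `i` under edge-coloring `c`. -/
def monoSub {V : Type*} (G : SimpleGraph V) {r : ℕ} (c : Sym2 V → Fin r) (i : Fin r) :
    SimpleGraph V where
  Adj u v := G.Adj u v ∧ c s(u, v) = i
  symm := ⟨fun u v h => ⟨h.1.symm, by rw [Sym2.eq_swap]; exact h.2⟩⟩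
  loopless := ⟨fun u h => G.loopless.irrefl u h.1⟩

/-- `V(G)` can be covered by at most `s` monochromatic connected subgraphs. -/
def HasMonoCover {V : Type*} (G : SimpleGraph V) {r : ℕ} (c : Sym2 V → Fin r) (s : ℕ) : Prop :=
  ∃ t : ℕ, t ≤ s ∧ ∃ (f : Fin t → Set V) (col : Fin t → Fin r),
    (∀ j, ((monoSub G c (col j)).induce (f j)).Connected) ∧ (⋃ j, f j) = Set.univ

/-- `V(G)` can be partitioned into at most `s` monochromatic connected subgraphs. -/
def HasMonoPartition {V : Type*} (G : SimpleGraph V) {r : ℕ} (c : Sym2 V → Fin r) (s : ℕ) : Prop :=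
  ∃ t : ℕ, t ≤ s ∧ ∃ (f : Fin t → Set V) (col : Fin t → Fin r),
    (∀ j, ((monoSub G c (col j)).induce (f j)).Connected) ∧ (⋃ j, f j) = Set.univ ∧
    ∀ j j', j ≠ j' → Disjoint (f j) (f j')

/-- The independence number of `G`. -/
noncomputable def indepNum' {V : Type*} (G : SimpleGraph V) : ℕ :=
  sSup {k | ∃ s : Finset V, s.card = k ∧ ∀ u ∈ s, ∀ v ∈ s, u ≠ v → ¬ G.Adj u v}


lemma exists_num_bits (r : ℕ) (t : ℕ → Bool) :
    ∃ B, B < 2 ^ r ∧ ∀ i, i < r → B.testBit i = t i := by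
  induction r with
  | zero => exact ⟨0, by simp, by omega⟩
  | succ r ih =>
    obtain ⟨B, hB, hbit⟩ := ih
    set c : ℕ := cond (t r) 1 0 with hc
    have hc1 : c ≤ 1 := by cases htr : t r <;> simp [hc, htr]
    refine ⟨2 ^ r * c + B, ?_, ?_⟩
    · have h1 : 2 ^ r * c ≤ 2 ^ r := by
        calc 2 ^ r * c ≤ 2 ^ r * 1 := Nat.mul_le_mul_left _ hc1
        _ = 2 ^ r := Nat.mul_one _
      have h2 : 2 ^ (r + 1) = 2 ^ r + 2 ^ r := by ring
      omega
    · intro i hi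
      rcases Nat.lt_or_ge i r with hi' | hi'
      · have hmod : (2 ^ r * c + B) % 2 ^ r = B := by
          rw [Nat.mul_comm, Nat.mul_add_mod', Nat.mod_eq_of_lt hB]
        have h1 := Nat.testBit_mod_two_pow (2 ^ r * c + B) r i
        rw [hmod, hbit i hi', decide_eq_true hi', Bool.true_and] at h1
        exact h1.symm
      · have hir : i = r := by omega
        subst hir
        rw [Nat.testBit_mul_two_pow_add_eq, Nat.testBit_lt_two_pow hB]
        cases htr : t i <;> simp [hc, htr]

/-- A Boolean invariant preserved along edges is constant on connected components. -/
lemma reach_invariant {X : Type*} {H : SimpleGraph X} {g : X → Bool}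
    (h : ∀ x y, H.Adj x y → g x = g y) {a b : X} (hre : H.Reachable a b) : g a = g b := by
  obtain ⟨w⟩ := hre
  induction w with
  | nil => rfl
  | cons hadj _ ih => exact (h _ _ hadj).trans ih

/-- A coordinate where `a` and `b` have equal bits (if one exists). -/
def colFun (r : ℕ) (hr : 0 < r) (a b : ℕ) : Fin r :=
  if h : (Finset.univ.filter
      fun i : Fin r => Nat.testBit a i.val = Nat.testBit b i.val).Nonempty
  then (Finset.univ.filter
      fun i : Fin r => Nat.testBit a i.val = Nat.testBit b i.val).min' h
  else ⟨0, hr⟩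

lemma colFun_symm (r : ℕ) (hr : 0 < r) (a b : ℕ) : colFun r hr a b = colFun r hr b a := by
  have hset : (Finset.univ.filter
      fun i : Fin r => Nat.testBit a i.val = Nat.testBit b i.val) =
      (Finset.univ.filter
      fun i : Fin r => Nat.testBit b i.val = Nat.testBit a i.val) := by
    apply Finset.filter_congr
    intro i _
    simp [eq_comm]
  simp only [colFun, hset]

lemma colFun_agree (r : ℕ) (hr : 0 < r) (a b : ℕ)
    (h : ∃ i : Fin r, Nat.testBit a i.val = Nat.testBit b i.val) :
    Nat.testBit a (colFun r hr a b).val = Nat.testBit b (colFun r hr a b).val := by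
  obtain ⟨i, hi⟩ := h
  have hne : (Finset.univ.filter
      fun i : Fin r => Nat.testBit a i.val = Nat.testBit b i.val).Nonempty :=
    ⟨i, by simp [hi]⟩
  rw [colFun, dif_pos hne]
  have h2 := Finset.min'_mem _ hne
  simpa using h2
/-- Example: for n = m·2^r there is a graph on n vertices with minimum degree exactly
(1 − 1/2^r)n − 1 = n − m − 1 and an r-coloring which admits no cover of the vertex set
by at most r monochromatic connected subgraphs of pairwise distinct colors. -/
theorem stmt15 (r m n : ℕ) (hr : 1 ≤ r) (hm : 1 ≤ m) (hn : n = m * 2 ^ r) :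
    ∃ G : SimpleGraph (Fin n),
      (∀ v : Fin n, n - m - 1 ≤ {w | G.Adj v w}.ncard) ∧
      (∃ v : Fin n, {w | G.Adj v w}.ncard = n - m - 1) ∧
      ∃ c : Sym2 (Fin n) → Fin r,
        ¬ ∃ t : ℕ, t ≤ r ∧ ∃ (f : Fin t → Set (Fin n)) (col : Fin t → Fin r),
            Function.Injective col ∧
            (∀ j, ((monoSub G c (col j)).induce (f j)).Connected) ∧
            (⋃ j, f j) = Set.univ := by
  classical
  have hr0 : 0 < r := hr
  have hm0 : 0 < m := hm
  have h2r : 0 < 2 ^ r := Nat.two_pow_pos r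
  have hn0 : 0 < n := by rw [hn]; positivity
  -- each vertex's block is `< 2 ^ r`
  have hblock : ∀ v : Fin n, v.val / m < 2 ^ r := by
    intro v
    rw [Nat.div_lt_iff_lt_mul hm0]
    have h1 := v.isLt
    have h2 : 2 ^ r * m = n := by rw [hn, Nat.mul_comm]
    omega
  -- the graph: adjacent iff distinct and blocks agree in some coordinate below r
  refine ⟨⟨fun u v => u ≠ v ∧ ∃ i : Fin r,
      Nat.testBit (u.val / m) i.val = Nat.testBit (v.val / m) i.val,
      ⟨fun u v h => ⟨h.1.symm, h.2.imp fun i hi => hi.symm⟩⟩,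
      ⟨fun u h => h.1 rfl⟩⟩, ?_, ?_, ?_⟩
  rotate_right
  -- the coloring
  · refine ⟨Sym2.lift ⟨fun u v => colFun r hr0 (u.val / m) (v.val / m),
      fun u v => colFun_symm r hr0 _ _⟩, ?_⟩
    rintro ⟨t, ht, f, col, hinj, hconn, hcover⟩
    -- a chosen point in each part
    have hne : ∀ j, (f j).Nonempty := fun j => by
      have := (hconn j).nonempty
      exact Set.nonempty_coe_sort.mp this
    set x : ∀ j : Fin t, Fin n := fun j => (hne j).choose with hxdef
    have hx : ∀ j, x j ∈ f j := fun j => (hne j).choose_spec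
    -- everything in `f j` shares the bit at coordinate `col j`
    have hshare : ∀ j, ∀ w ∈ f j,
        Nat.testBit (w.val / m) (col j).val = Nat.testBit ((x j).val / m) (col j).val := by
      intro j w hw
      have hreach := (hconn j).preconnected ⟨w, hw⟩ ⟨x j, hx j⟩
      refine reach_invariant (g := fun z : (f j : Set (Fin n)) =>
        Nat.testBit (z.val.val / m) (col j).val) ?_ hreach
      rintro ⟨y, hy⟩ ⟨z, hz⟩ hadj
      have hGadj : y ≠ z ∧ ∃ i : Fin r,
          Nat.testBit (y.val / m) i.val = Nat.testBit (z.val / m) i.val := hadj.1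
      have hcadj : colFun r hr0 (y.val / m) (z.val / m) = col j := hadj.2
      have hagree := colFun_agree r hr0 (y.val / m) (z.val / m) hGadj.2
      rw [hcadj] at hagree
      exact hagree
    -- pick a vertex whose bits disagree with every part at its color
    set t0 : ℕ → Bool := fun i =>
      if h : ∃ j, (col j).val = i then ! Nat.testBit ((x h.choose).val / m) i else false
      with ht0def
    obtain ⟨B, hB, hBbit⟩ := exists_num_bits r t0
    have hBm : B * m < n := by
      have h1 : B * m < 2 ^ r * m := (Nat.mul_lt_mul_right hm0).mpr hB
      have h2 : 2 ^ r * m = n := by rw [hn, Nat.mul_comm]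
      omega
    set v0 : Fin n := ⟨B * m, hBm⟩ with hv0def
    have hv0bit : ∀ i, i < r → Nat.testBit (v0.val / m) i = t0 i := by
      intro i hi
      have : v0.val / m = B := by simp [hv0def, Nat.mul_div_cancel _ hm0]
      rw [this]
      exact hBbit i hi
    -- v0 is covered by some part
    have hv0mem : v0 ∈ ⋃ j, f j := by rw [hcover]; trivial
    obtain ⟨S, ⟨j, rfl⟩, hv0S⟩ := hv0mem
    -- derive the contradiction at coordinate `col j`
    have hex : ∃ j', (col j').val = (col j).val := ⟨j, rfl⟩
    have hj' : hex.choose = j := by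
      apply hinj
      exact Fin.val_injective hex.choose_spec
    have h1 : Nat.testBit (v0.val / m) (col j).val = t0 (col j).val :=
      hv0bit (col j).val (col j).isLt
    have h2 : t0 (col j).val = ! Nat.testBit ((x j).val / m) (col j).val := by
      rw [ht0def]
      simp only [dif_pos hex]
      rw [hj']
    have h3 := hshare j v0 hv0S
    rw [h1, h2] at h3
    simp at h3
  -- second bullet: some vertex with degree exactly n - m - 1
  all_goals
    have hdeg : ∀ v : Fin n,
        ({w : Fin n | v ≠ w ∧ ∃ i : Fin r,
          Nat.testBit (v.val / m) i.val = Nat.testBit (w.val / m) i.val}).ncard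
          = n - m - 1 := by
      intro v
      obtain ⟨C, hC, hCbit⟩ := exists_num_bits r (fun i => ! Nat.testBit (v.val / m) i)
      set S : Set (Fin n) := {w | w.val / m = C} with hSdef
      -- S has exactly m elements
      have hg : ∀ j : Fin m, C * m + j.val < n := by
        intro j
        have h1 : C * m + j.val < (C + 1) * m := by
          have := j.isLt
          nlinarith [j.isLt]
        have h2 : (C + 1) * m ≤ 2 ^ r * m := Nat.mul_le_mul_right m (by omega)
        have h3 : 2 ^ r * m = n := by rw [hn, Nat.mul_comm]
        omega
      have hSrange : S = Set.range (fun j : Fin m => (⟨C * m + j.val, hg j⟩ : Fin n)) := by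
        ext w
        constructor
        · intro hw
          refine ⟨⟨w.val % m, Nat.mod_lt _ hm0⟩, ?_⟩
          apply Fin.ext
          simp only
          have hw' : w.val / m = C := hw
          have h4 := Nat.div_add_mod w.val m
          rw [hw', Nat.mul_comm m C] at h4
          omega
        · rintro ⟨j, rfl⟩
          show (C * m + j.val) / m = C
          rw [Nat.mul_comm C m, Nat.mul_add_div hm0]
          have : j.val / m = 0 := Nat.div_eq_of_lt j.isLt
          omega
      have hSinj : Function.Injective (fun j : Fin m => (⟨C * m + j.val, hg j⟩ : Fin n)) := by
        intro a b hab
        have := Fin.val_eq_of_eq hab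
        simp only at this
        exact Fin.ext (by omega)
      have hScard : S.ncard = m := by
        rw [hSrange, ← Set.image_univ, Set.ncard_image_of_injective _ hSinj,
          Set.ncard_univ]
        simp
      -- non-adjacency characterisation
      have hchar : ∀ w : Fin n,
          ¬ (v ≠ w ∧ ∃ i : Fin r,
            Nat.testBit (v.val / m) i.val = Nat.testBit (w.val / m) i.val)
          ↔ (w = v ∨ w ∈ S) := by
        intro w
        constructor
        · intro hw
          by_cases hwv : w = v
          · exact Or.inl hwv
          · right
            push_neg at hw
            have hwv' : v ≠ w := fun h => hwv h.symm
            have hall := hw hwv'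
            show w.val / m = C
            apply Nat.eq_of_testBit_eq
            intro i
            rcases Nat.lt_or_ge i r with hi | hi
            · have h1 := hall ⟨i, hi⟩
              rw [hCbit i hi]
              cases h2 : Nat.testBit (v.val / m) i <;>
                cases h3 : Nat.testBit (w.val / m) i <;> simp_all
            · have h1 : w.val / m < 2 ^ i :=
                lt_of_lt_of_le (hblock w) (Nat.pow_le_pow_right (by norm_num) hi)
              have h2 : C < 2 ^ i :=
                lt_of_lt_of_le hC (Nat.pow_le_pow_right (by norm_num) hi)
              rw [Nat.testBit_lt_two_pow h1, Nat.testBit_lt_two_pow h2]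
        · rintro (rfl | hwS)
          · rintro ⟨hne, -⟩; exact hne rfl
          · rintro ⟨-, i, hi⟩
            have hw' : w.val / m = C := hwS
            rw [hw', hCbit i.val i.isLt] at hi
            exact (Bool.not_ne_self _ hi.symm).elim
      have hvS : v ∉ S := by
        intro hvS
        have hv' : v.val / m = C := hvS
        have := hCbit 0 hr0
        rw [hv'] at this
        exact (Bool.not_ne_self _ this.symm).elim
      have hcompl : {w : Fin n | v ≠ w ∧ ∃ i : Fin r,
          Nat.testBit (v.val / m) i.val = Nat.testBit (w.val / m) i.val}
          = ({v} ∪ S)ᶜ := by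
        ext w
        simp only [Set.mem_setOf_eq, Set.mem_compl_iff, Set.mem_union, Set.mem_singleton_iff]
        rw [← hchar w]
        tauto
      have hdisj : Disjoint ({v} : Set (Fin n)) S := by
        rw [Set.disjoint_left]
        rintro a rfl
        exact hvS
      have hunion : ({v} ∪ S : Set (Fin n)).ncard = 1 + m := by
        rw [Set.ncard_union_eq hdisj (Set.toFinite _) (Set.toFinite _),
          Set.ncard_singleton, hScard]
      have hsum := Set.ncard_add_ncard_compl ({v} ∪ S : Set (Fin n))
        (Set.toFinite _) (Set.toFinite _)
      rw [hunion, Nat.card_eq_fintype_card, Fintype.card_fin] at hsum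
      rw [hcompl]
      have hnm : m + 1 ≤ n := by
        have : m * 2 ≤ m * 2 ^ r := Nat.mul_le_mul_left m (by
          calc 2 = 2 ^ 1 := rfl
          _ ≤ 2 ^ r := Nat.pow_le_pow_right (by norm_num) hr)
        omega
      omega
  · intro v
    exact le_of_eq (hdeg v).symm
  · exact ⟨⟨0, hn0⟩, hdeg _⟩
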